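/- Let (μ_t)_{t≥0} be a family of integrable probability measures on ℝ, each with negative mean m_t. Then the family is non-decreasing in the WDS order (i.e. the functions Ψ^{wds}_{μ_t} are pointwise non-decreasing in t) if and only if the function K(t,x) = ∫_{[x,∞)} (y−x) dμ_t(dy) − m_t is TP₂ on ℝ₊ × ℝ. -/

import Mathlib

open MeasureTheory Set Filter

noncomputable def meanM (μ : Measure ℝ) : ℝ := ∫ y, y ∂μ

noncomputable def rSupE (μ : Measure ℝ) : EReal :=
  sInf ((fun z : ℝ => (z : EReal)) '' {z : ℝ | μ (Ici z) = 0})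

noncomputable def psiWds (μ : Measure ℝ) (x : ℝ) : EReal :=
  if (x : EReal) < rSupE μ then
    ((((∫ y in Ici x, y ∂μ) - meanM μ) / (μ (Ici x)).toReal : ℝ) : EReal)
  else ⊤

noncomputable def Kfun (μ : Measure ℝ) (x : ℝ) : ℝ :=
  (∫ y in Ici x, (y - x) ∂μ) - meanM μ

open Topology

lemma Kdiff_bounds {ν : Measure ℝ} [IsProbabilityMeasure ν]
    (hi : Integrable (fun y : ℝ => y) ν) {u z : ℝ} (h : u ≤ z) :
    (z - u) * (ν (Ici z)).toReal ≤ Kfun ν u - Kfun ν z ∧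
      Kfun ν u - Kfun ν z ≤ (z - u) * (ν (Ioi u)).toReal := by
  have hiu : Integrable (fun y : ℝ => y - u) ν := hi.sub (integrable_const u)
  have hiz : Integrable (fun y : ℝ => y - z) ν := hi.sub (integrable_const z)
  have hIu := hiu.indicator (measurableSet_Ici (a := u))
  have hIz := hiz.indicator (measurableSet_Ici (a := z))
  have hK : Kfun ν u - Kfun ν z =
      ∫ y, ((Ici u).indicator (fun y => y - u) y - (Ici z).indicator (fun y => y - z) y) ∂ν := by
    rw [integral_sub hIu hIz, integral_indicator measurableSet_Ici,
      integral_indicator measurableSet_Ici]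
    simp only [Kfun]; ring
  constructor
  · rw [hK]
    have hc := integral_indicator_const (μ := ν) (z - u) (measurableSet_Ici (a := z))
    calc (z - u) * (ν (Ici z)).toReal
        = ∫ y, (Ici z).indicator (fun _ => z - u) y ∂ν := by
          rw [hc, smul_eq_mul, measureReal_def]; ring
      _ ≤ _ := by
          apply integral_mono ((integrable_const (z-u)).indicator (measurableSet_Ici (a := z)))
            (hIu.sub hIz)
          intro y
          simp only [Set.indicator_apply, mem_Ici, Pi.sub_apply]
          split_ifs <;> linarith
  · rw [hK]
    have hc := integral_indicator_const (μ := ν) (z - u) (measurableSet_Ioi (a := u))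
    calc ∫ y, ((Ici u).indicator (fun y => y - u) y - (Ici z).indicator (fun y => y - z) y) ∂ν
        ≤ ∫ y, (Ioi u).indicator (fun _ => z - u) y ∂ν := by
          apply integral_mono (hIu.sub hIz)
            ((integrable_const (z-u)).indicator (measurableSet_Ioi (a := u)))
          intro y
          simp only [Set.indicator_apply, mem_Ici, mem_Ioi, Pi.sub_apply]
          split_ifs <;> linarith
      _ = (z - u) * (ν (Ioi u)).toReal := by rw [hc, smul_eq_mul, measureReal_def]; ring
-- helpers2

lemma K_ge {ν : Measure ℝ} (u : ℝ) : -meanM ν ≤ Kfun ν u := by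
  have : 0 ≤ ∫ y in Ici u, (y - u) ∂ν :=
    setIntegral_nonneg measurableSet_Ici (fun y hy => by simp at hy; linarith)
  simp only [Kfun]; linarith

lemma K_pos {ν : Measure ℝ} (hm : meanM ν < 0) (u : ℝ) : 0 < Kfun ν u :=
  lt_of_lt_of_le (by linarith) (K_ge u)

lemma K_cont {ν : Measure ℝ} [IsProbabilityMeasure ν]
    (hi : Integrable (fun y : ℝ => y) ν) : Continuous (Kfun ν) := by
  have hl : LipschitzWith 1 (Kfun ν) := by
    apply LipschitzWith.of_dist_le_mul
    intro a b
    wlog hab : b ≤ a generalizing a b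
    · rw [dist_comm, dist_comm a b]; exact this b a (by linarith [le_of_not_ge hab])
    have h1 := (Kdiff_bounds hi hab).1
    have h2 := (Kdiff_bounds hi hab).2
    have hle : (ν (Ioi b)).toReal ≤ 1 := by
      rw [show (1:ℝ) = (ν univ).toReal by simp]
      exact ENNReal.toReal_mono (measure_ne_top _ _) (measure_mono (subset_univ _))
    have hge : 0 ≤ (ν (Ici a)).toReal := ENNReal.toReal_nonneg
    have hd : 0 ≤ Kfun ν b - Kfun ν a :=
      le_trans (mul_nonneg (by linarith) hge) h1
    rw [Real.dist_eq, Real.dist_eq, abs_of_nonpos (by linarith),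
      abs_of_nonneg (by linarith : (0:ℝ) ≤ a - b)]
    have hmu : (a - b) * (ν (Ioi b)).toReal ≤ (a - b) * 1 :=
      mul_le_mul_of_nonneg_left hle (by linarith)
    push_cast
    linarith
  exact hl.continuous

-- rSup facts
lemma measure_Ici_ne_zero {ν : Measure ℝ} {w : ℝ} (h : (w : EReal) < rSupE ν) :
    ν (Ici w) ≠ 0 := by
  intro h0
  have : rSupE ν ≤ (w : EReal) := sInf_le ⟨w, h0, rfl⟩
  exact absurd h (not_lt.2 this)

lemma measure_Ici_eq_zero {ν : Measure ℝ} {w : ℝ} (h : rSupE ν < (w : EReal)) :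
    ν (Ici w) = 0 := by
  obtain ⟨a, ⟨z, hz, rfl⟩, haw⟩ := sInf_lt_iff.1 h
  simp only [] at haw
  have : z < w := EReal.coe_lt_coe_iff.1 haw
  exact measure_mono_null (Ici_subset_Ici.2 this.le) hz

lemma measure_Ioi_eq_zero {ν : Measure ℝ} {u : ℝ} (h : rSupE ν ≤ (u : EReal)) :
    ν (Ioi u) = 0 := by
  have : Ioi u ⊆ ⋃ n : ℕ, Ici (u + 1/(n+1)) := by
    intro y hy
    simp only [mem_Ioi] at hy
    obtain ⟨n, hn⟩ := exists_nat_one_div_lt (show 0 < y - u by linarith)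
    exact mem_iUnion.2 ⟨n, by simp only [mem_Ici]; push_cast; linarith [hn]⟩
  refine measure_mono_null this (measure_iUnion_null fun n => ?_)
  apply measure_Ici_eq_zero
  refine lt_of_le_of_lt h (EReal.coe_lt_coe_iff.2 ?_)
  have : (0:ℝ) < 1/(n+1) := by positivity
  linarith

lemma K_const_of_null {ν : Measure ℝ} {u : ℝ} (h : ν (Ioi u) = 0) :
    Kfun ν u = -meanM ν := by
  have hsub : {y | (Ici u).indicator (fun y => y - u) y ≠ 0} ⊆ Ioi u := by
    intro y hy
    simp only [Set.indicator_apply, mem_Ici, ne_eq, mem_setOf_eq] at hy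
    by_contra h'
    simp only [mem_Ioi, not_lt] at h'
    split_ifs at hy with h2
    · exact hy (by linarith)
    · exact hy rfl
  have hae : (fun y => (Ici u).indicator (fun y : ℝ => y - u) y) =ᵐ[ν] (fun _ => (0:ℝ)) := by
    rw [Filter.EventuallyEq, ae_iff]
    exact measure_mono_null hsub h
  have : ∫ y in Ici u, (y - u) ∂ν = 0 := by
    rw [← integral_indicator measurableSet_Ici, integral_congr_ae hae, integral_zero]
  simp [Kfun, this]
-- helpers3

lemma K_eq {ν : Measure ℝ} [IsProbabilityMeasure ν]
    (hi : Integrable (fun y : ℝ => y) ν) (x : ℝ) :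
    Kfun ν x = (∫ y in Ici x, y ∂ν) - x * (ν (Ici x)).toReal - meanM ν := by
  have h1 : ∫ y in Ici x, (y - x) ∂ν = (∫ y in Ici x, y ∂ν) - ∫ _ in Ici x, x ∂ν :=
    integral_sub hi.restrict (integrable_const x)
  have h2 : ∫ _ in Ici x, x ∂ν = (ν (Ici x)).toReal * x := by
    rw [integral_const]; simp [smul_eq_mul, measureReal_def]
  simp only [Kfun, h1, h2]; ring

lemma psi_iff_cross {ν₁ ν₂ : Measure ℝ} [IsProbabilityMeasure ν₁] [IsProbabilityMeasure ν₂]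
    (hi₁ : Integrable (fun y : ℝ => y) ν₁) (hi₂ : Integrable (fun y : ℝ => y) ν₂)
    {z : ℝ} (h₁ : (z : EReal) < rSupE ν₁) (h₂ : (z : EReal) < rSupE ν₂) :
    (psiWds ν₁ z ≤ psiWds ν₂ z ↔
      (ν₂ (Ici z)).toReal * Kfun ν₁ z ≤ (ν₁ (Ici z)).toReal * Kfun ν₂ z) := by
  have hG₁ : 0 < (ν₁ (Ici z)).toReal :=
    ENNReal.toReal_pos (measure_Ici_ne_zero h₁) (measure_ne_top _ _)
  have hG₂ : 0 < (ν₂ (Ici z)).toReal :=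
    ENNReal.toReal_pos (measure_Ici_ne_zero h₂) (measure_ne_top _ _)
  rw [psiWds, psiWds, if_pos h₁, if_pos h₂, EReal.coe_le_coe_iff,
    div_le_div_iff₀ hG₁ hG₂, K_eq hi₁, K_eq hi₂]
  constructor <;> intro h <;> nlinarith [h]
-- helpers4: measure limits

lemma tendsto_Ici_left (ν : Measure ℝ) [IsProbabilityMeasure ν] (x : ℝ) :
    Tendsto (fun n : ℕ => (ν (Ici (x - 1/(n+1)))).toReal) atTop (𝓝 ((ν (Ici x)).toReal)) := by
  have hmono : Antitone (fun n : ℕ => Ici (x - 1/((n:ℝ)+1))) := by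
    intro n m hnm
    apply Ici_subset_Ici.2
    have : 1/((m:ℝ)+1) ≤ 1/((n:ℝ)+1) := by
      apply one_div_le_one_div_of_le (by positivity)
      exact_mod_cast by linarith [(Nat.cast_le (α := ℝ)).2 hnm]
    linarith
  have hI : (⋂ n : ℕ, Ici (x - 1/((n:ℝ)+1))) = Ici x := by
    ext y
    simp only [mem_iInter, mem_Ici]
    constructor
    · intro h
      by_contra hy
      push_neg at hy
      obtain ⟨n, hn⟩ := exists_nat_one_div_lt (show 0 < x - y by linarith)
      have := h n
      push_cast at hn ⊢
      linarith
    · intro h n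
      have : (0:ℝ) < 1/((n:ℝ)+1) := by positivity
      linarith
  have h0 : Tendsto (fun n : ℕ => ν (Ici (x - 1/((n:ℝ)+1)))) atTop (𝓝 (ν (Ici x))) := by
    have := tendsto_measure_iInter_atTop (μ := ν)
      (fun n : ℕ => (measurableSet_Ici (a := x - 1/((n:ℝ)+1))).nullMeasurableSet)
      hmono ⟨0, measure_ne_top _ _⟩
    rwa [hI] at this
  exact (ENNReal.tendsto_toReal (measure_ne_top _ _)).comp h0

lemma tendsto_Ici_right (ν : Measure ℝ) [IsProbabilityMeasure ν] (u : ℝ) :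
    Tendsto (fun n : ℕ => (ν (Ici (u + 1/(n+1)))).toReal) atTop (𝓝 ((ν (Ioi u)).toReal)) := by
  have hmono : Monotone (fun n : ℕ => Ici (u + 1/((n:ℝ)+1))) := by
    intro n m hnm
    apply Ici_subset_Ici.2
    have : 1/((m:ℝ)+1) ≤ 1/((n:ℝ)+1) := by
      apply one_div_le_one_div_of_le (by positivity)
      exact_mod_cast by linarith [(Nat.cast_le (α := ℝ)).2 hnm]
    linarith
  have hI : (⋃ n : ℕ, Ici (u + 1/((n:ℝ)+1))) = Ioi u := by
    ext y
    simp only [mem_iUnion, mem_Ici, mem_Ioi]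
    constructor
    · rintro ⟨n, hn⟩
      have : (0:ℝ) < 1/((n:ℝ)+1) := by positivity
      linarith
    · intro h
      obtain ⟨n, hn⟩ := exists_nat_one_div_lt (show 0 < y - u by linarith)
      exact ⟨n, by push_cast at hn ⊢; linarith⟩
  have h0 : Tendsto (fun n : ℕ => ν (Ici (u + 1/((n:ℝ)+1)))) atTop (𝓝 (ν (Ioi u))) := by
    have := tendsto_measure_iUnion_atTop (μ := ν) hmono
    rwa [hI] at this
  exact (ENNReal.tendsto_toReal (measure_ne_top _ _)).comp h0

lemma tendsto_seq_right (u : ℝ) :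
    Tendsto (fun n : ℕ => u + 1/((n:ℝ)+1)) atTop (𝓝 u) := by
  have h := tendsto_one_div_add_atTop_nhds_zero_nat (𝕜 := ℝ)
  have := h.const_add u
  simpa using this
-- helpers5

lemma star_ineq {ν₁ ν₂ : Measure ℝ} [IsProbabilityMeasure ν₁] [IsProbabilityMeasure ν₂]
    (hi₁ : Integrable (fun y : ℝ => y) ν₁) (hi₂ : Integrable (fun y : ℝ => y) ν₂)
    (hm₁ : meanM ν₁ < 0) (hm₂ : meanM ν₂ < 0)
    (hψ : ∀ z : ℝ, psiWds ν₁ z ≤ psiWds ν₂ z) (u : ℝ) :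
    (ν₂ (Ioi u)).toReal * Kfun ν₁ u ≤ (ν₁ (Ioi u)).toReal * Kfun ν₂ u := by
  have hpoint : ∀ z : ℝ, (z : EReal) ≠ rSupE ν₂ →
      (ν₂ (Ici z)).toReal * Kfun ν₁ z ≤ (ν₁ (Ici z)).toReal * Kfun ν₂ z := by
    intro z hz
    rcases hz.lt_or_gt with h2 | h2
    · have h1 : (z : EReal) < rSupE ν₁ := by
        by_contra hc
        have hpsi1 : psiWds ν₁ z = ⊤ := by rw [psiWds, if_neg hc]
        have hpsi2 := hψ z
        rw [hpsi1, top_le_iff, psiWds, if_pos h2] at hpsi2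
        exact EReal.coe_ne_top _ hpsi2
      exact (psi_iff_cross hi₁ hi₂ h1 h2).1 (hψ z)
    · rw [measure_Ici_eq_zero h2]
      simp only [ENNReal.toReal_zero, zero_mul]
      exact mul_nonneg ENNReal.toReal_nonneg (K_pos hm₂ z).le
  set zn : ℕ → ℝ := fun n => u + 1/((n:ℝ)+1) with hzn
  have hz_gt : ∀ n, u < zn n := fun n => by
    have : (0:ℝ) < 1/((n:ℝ)+1) := by positivity
    simp only [hzn]; linarith
  have hne : ∀ᶠ n in atTop, ((zn n : ℝ) : EReal) ≠ rSupE ν₂ := by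
    by_cases hex : ∃ n : ℕ, ((zn n : ℝ) : EReal) = rSupE ν₂
    · obtain ⟨n₀, hn₀⟩ := hex
      filter_upwards [eventually_gt_atTop n₀] with n hn hc
      rw [← hn₀] at hc
      have heq : zn n = zn n₀ := by exact_mod_cast hc
      have hlt : 1/((n:ℝ)+1) < 1/((n₀:ℝ)+1) := by
        apply one_div_lt_one_div_of_lt (by positivity)
        have : (n₀:ℝ) < n := by exact_mod_cast hn
        linarith
      simp only [hzn] at heq
      linarith
    · push_neg at hex
      exact Eventually.of_forall hex
  have hP : ∀ᶠ n in atTop,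
      (ν₂ (Ici (zn n))).toReal * Kfun ν₁ (zn n) ≤ (ν₁ (Ici (zn n))).toReal * Kfun ν₂ (zn n) :=
    hne.mono (fun n h => hpoint _ h)
  have hzu : Tendsto zn atTop (𝓝 u) := tendsto_seq_right u
  have hK₁ : Tendsto (fun n => Kfun ν₁ (zn n)) atTop (𝓝 (Kfun ν₁ u)) :=
    ((K_cont hi₁).tendsto u).comp hzu
  have hK₂ : Tendsto (fun n => Kfun ν₂ (zn n)) atTop (𝓝 (Kfun ν₂ u)) :=
    ((K_cont hi₂).tendsto u).comp hzu
  have ha : Tendsto (fun n => (ν₂ (Ici (zn n))).toReal * Kfun ν₁ (zn n)) atTop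
      (𝓝 ((ν₂ (Ioi u)).toReal * Kfun ν₁ u)) := (tendsto_Ici_right ν₂ u).mul hK₁
  have hb : Tendsto (fun n => (ν₁ (Ici (zn n))).toReal * Kfun ν₂ (zn n)) atTop
      (𝓝 ((ν₁ (Ioi u)).toReal * Kfun ν₂ u)) := (tendsto_Ici_right ν₁ u).mul hK₂
  exact le_of_tendsto_of_tendsto ha hb hP
-- helpers6

lemma cross_of_psi {ν₁ ν₂ : Measure ℝ} [IsProbabilityMeasure ν₁] [IsProbabilityMeasure ν₂]
    (hi₁ : Integrable (fun y : ℝ => y) ν₁) (hi₂ : Integrable (fun y : ℝ => y) ν₂)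
    (hm₁ : meanM ν₁ < 0) (hm₂ : meanM ν₂ < 0)
    (hψ : ∀ z : ℝ, psiWds ν₁ z ≤ psiWds ν₂ z) {x y : ℝ} (hxy : x ≤ y) :
    Kfun ν₁ y * Kfun ν₂ x ≤ Kfun ν₁ x * Kfun ν₂ y := by
  set f : ℝ → ℝ := fun u => Real.log (Kfun ν₁ u) - Real.log (Kfun ν₂ u) with hfdef
  have hfc : Continuous f :=
    ((K_cont hi₁).log (fun u => (K_pos hm₁ u).ne')).sub
      ((K_cont hi₂).log (fun u => (K_pos hm₂ u).ne'))
  have bound : ∀ u ∈ Ico x y, ∀ r, (0:ℝ) < r → ∃ᶠ z in 𝓝[>] u, slope f u z < r := by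
    intro u _ r hr
    set zn : ℕ → ℝ := fun n => u + 1/((n:ℝ)+1) with hzn
    have hz_gt : ∀ n, u < zn n := fun n => by
      have : (0:ℝ) < 1/((n:ℝ)+1) := by positivity
      simp only [hzn]; linarith
    have hzt : Tendsto zn atTop (𝓝[>] u) := by
      rw [tendsto_nhdsWithin_iff]
      exact ⟨tendsto_seq_right u, Eventually.of_forall (fun n => hz_gt n)⟩
    set g : ℕ → ℝ := fun n =>
      -(ν₁ (Ici (zn n))).toReal / Kfun ν₁ u + (ν₂ (Ioi u)).toReal / Kfun ν₂ (zn n) with hgdef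
    have hbound : ∀ n, slope f u (zn n) ≤ g n := by
      intro n
      have hz : u < zn n := hz_gt n
      have hd : (0:ℝ) < zn n - u := by linarith
      have p₁u := K_pos hm₁ u; have p₁z := K_pos hm₁ (zn n)
      have p₂u := K_pos hm₂ u; have p₂z := K_pos hm₂ (zn n)
      have h₁ := (Kdiff_bounds hi₁ hz.le).1
      have h₂ := (Kdiff_bounds hi₂ hz.le).2
      have e₁ : Real.log (Kfun ν₁ (zn n)) - Real.log (Kfun ν₁ u) ≤
          (Kfun ν₁ (zn n) - Kfun ν₁ u) / Kfun ν₁ u := by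
        rw [← Real.log_div p₁z.ne' p₁u.ne']
        have hlog := Real.log_le_sub_one_of_pos (div_pos p₁z p₁u)
        have heq : Kfun ν₁ (zn n) / Kfun ν₁ u - 1 =
            (Kfun ν₁ (zn n) - Kfun ν₁ u) / Kfun ν₁ u := by field_simp
        linarith
      have e₂ : Real.log (Kfun ν₂ u) - Real.log (Kfun ν₂ (zn n)) ≤
          (Kfun ν₂ u - Kfun ν₂ (zn n)) / Kfun ν₂ (zn n) := by
        rw [← Real.log_div p₂u.ne' p₂z.ne']
        have hlog := Real.log_le_sub_one_of_pos (div_pos p₂u p₂z)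
        have heq : Kfun ν₂ u / Kfun ν₂ (zn n) - 1 =
            (Kfun ν₂ u - Kfun ν₂ (zn n)) / Kfun ν₂ (zn n) := by field_simp
        linarith
      have b₁ := div_le_div_of_nonneg_right
        (show Kfun ν₁ (zn n) - Kfun ν₁ u ≤ -((zn n - u) * (ν₁ (Ici (zn n))).toReal) by
          linarith) p₁u.le
      have b₂ := div_le_div_of_nonneg_right
        (show Kfun ν₂ u - Kfun ν₂ (zn n) ≤ (zn n - u) * (ν₂ (Ioi u)).toReal by linarith) p₂z.le
      rw [slope_def_field, div_le_iff₀ hd]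
      have hsum : f (zn n) - f u ≤
          (-((zn n - u) * (ν₁ (Ici (zn n))).toReal)) / Kfun ν₁ u +
            ((zn n - u) * (ν₂ (Ioi u)).toReal) / Kfun ν₂ (zn n) := by
        simp only [hfdef]
        linarith
      calc f (zn n) - f u ≤ _ := hsum
        _ = g n * (zn n - u) := by simp only [hgdef]; ring
    have hg : Tendsto g atTop
        (𝓝 (-(ν₁ (Ioi u)).toReal / Kfun ν₁ u + (ν₂ (Ioi u)).toReal / Kfun ν₂ u)) := by
      apply Tendsto.add
      · exact ((tendsto_Ici_right ν₁ u).neg).div_const _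
      · exact tendsto_const_nhds.div (((K_cont hi₂).tendsto u).comp (tendsto_seq_right u))
          (K_pos hm₂ u).ne'
    have hlim : -(ν₁ (Ioi u)).toReal / Kfun ν₁ u + (ν₂ (Ioi u)).toReal / Kfun ν₂ u ≤ 0 := by
      have hstar := star_ineq hi₁ hi₂ hm₁ hm₂ hψ u
      have p₁u := K_pos hm₁ u; have p₂u := K_pos hm₂ u
      rw [neg_div, neg_add_le_iff_le_add, add_zero, div_le_div_iff₀ p₂u p₁u]
      linarith
    have hev : ∀ᶠ n in atTop, slope f u (zn n) < r :=
      ((hg.eventually (eventually_lt_nhds (lt_of_le_of_lt hlim hr))).mono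
        (fun n h => lt_of_le_of_lt (hbound n) h))
    exact hzt.frequently hev.frequently
  have hfin := image_le_of_liminf_slope_right_le_deriv_boundary
    (f := f) (a := x) (b := y) (B := fun _ => f x) (B' := fun _ => 0)
    hfc.continuousOn le_rfl continuousOn_const
    (fun u _ => hasDerivWithinAt_const u _ _) (fun u hu r hr => bound u hu r hr)
  have hfy : f y ≤ f x := hfin ⟨hxy, le_rfl⟩
  have p₁x := K_pos hm₁ x; have p₁y := K_pos hm₁ y
  have p₂x := K_pos hm₂ x; have p₂y := K_pos hm₂ y
  rw [← Real.log_le_log_iff (by positivity) (by positivity),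
    Real.log_mul p₁y.ne' p₂x.ne', Real.log_mul p₁x.ne' p₂y.ne']
  simp only [hfdef] at hfy
  linarith
-- main theorem

theorem stmt6 (μ : ℝ → Measure ℝ)
    (hprob : ∀ t, 0 ≤ t → IsProbabilityMeasure (μ t))
    (hint : ∀ t, 0 ≤ t → Integrable (fun y : ℝ => y) (μ t))
    (hneg : ∀ t, 0 ≤ t → meanM (μ t) < 0) :
    (∀ s t, 0 ≤ s → s ≤ t → ∀ x : ℝ, psiWds (μ s) x ≤ psiWds (μ t) x) ↔
      (∀ s t, 0 ≤ s → s ≤ t → ∀ x y : ℝ, x ≤ y →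
        Kfun (μ s) y * Kfun (μ t) x ≤ Kfun (μ s) x * Kfun (μ t) y) := by
  constructor
  · intro hψ s t hs hst x y hxy
    haveI := hprob s hs; haveI := hprob t (hs.trans hst)
    exact cross_of_psi (hint s hs) (hint t (hs.trans hst)) (hneg s hs)
      (hneg t (hs.trans hst)) (hψ s t hs hst) hxy
  · intro hK s t hs hst x
    have ht := hs.trans hst
    haveI := hprob s hs; haveI := hprob t ht
    have his := hint s hs; have hit := hint t ht
    have hms := hneg s hs; have hmt := hneg t ht
    by_cases hxt : (x : EReal) < rSupE (μ t)
    · have hxs : (x : EReal) < rSupE (μ s) := by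
        by_contra hc
        push_neg at hc
        obtain ⟨x', hxx', hx't⟩ := EReal.lt_iff_exists_real_btwn.1 hxt
        have hxx'r : x < x' := EReal.coe_lt_coe_iff.1 hxx'
        have h1 := (Kdiff_bounds hit hxx'r.le).1
        have hpos : 0 < ((μ t) (Ici x')).toReal :=
          ENNReal.toReal_pos (measure_Ici_ne_zero hx't) (measure_ne_top _ _)
        have hks : Kfun (μ s) x = -meanM (μ s) :=
          K_const_of_null (measure_Ioi_eq_zero hc)
        have hks' : Kfun (μ s) x' = -meanM (μ s) :=
          K_const_of_null (measure_mono_null (Ioi_subset_Ioi hxx'r.le)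
            (measure_Ioi_eq_zero hc))
        have htp := hK s t hs hst x x' hxx'r.le
        rw [hks, hks'] at htp
        have hlt : Kfun (μ t) x' < Kfun (μ t) x := by nlinarith
        have hm0 : 0 < -meanM (μ s) := by linarith
        nlinarith [mul_lt_mul_of_pos_left hlt hm0]
      rw [psi_iff_cross his hit hxs hxt]
      -- key inequality via left limits
      have key : ∀ n : ℕ, Kfun (μ s) x * ((μ t) (Ici x)).toReal ≤
          ((μ s) (Ici (x - 1/((n:ℝ)+1)))).toReal * Kfun (μ t) x := by
        intro n
        set x' := x - 1/((n:ℝ)+1) with hx'def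
        have hd : (0:ℝ) < 1/((n:ℝ)+1) := by positivity
        have hx' : x' < x := by simp only [hx'def]; linarith
        have htp := hK s t hs hst x' x hx'.le
        have l1 := (Kdiff_bounds hit hx'.le).1
        have l2 := (Kdiff_bounds his hx'.le).2
        have l3 : ((μ s) (Ioi x')).toReal ≤ ((μ s) (Ici x')).toReal :=
          ENNReal.toReal_mono (measure_ne_top _ _) (measure_mono Ioi_subset_Ici_self)
        have hKs := K_pos hms x; have hKt := K_pos hmt x
        have hdx : (0:ℝ) < x - x' := by linarith
        have c1 : Kfun (μ s) x * Kfun (μ t) x + (x - x') * (Kfun (μ s) x * ((μ t) (Ici x)).toReal)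
            ≤ Kfun (μ s) x * Kfun (μ t) x' := by
          nlinarith [mul_le_mul_of_nonneg_left l1 hKs.le]
        have c2 : Kfun (μ s) x' * Kfun (μ t) x ≤ Kfun (μ s) x * Kfun (μ t) x +
            (x - x') * (((μ s) (Ici x')).toReal * Kfun (μ t) x) := by
          nlinarith [mul_le_mul_of_nonneg_right l2 hKt.le,
            mul_le_mul_of_nonneg_right (mul_le_mul_of_nonneg_left l3 hdx.le) hKt.le]
        have : (x - x') * (Kfun (μ s) x * ((μ t) (Ici x)).toReal) ≤
            (x - x') * (((μ s) (Ici x')).toReal * Kfun (μ t) x) := by linarith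
        exact le_of_mul_le_mul_left (by linarith) hdx
      have htd : Tendsto (fun n : ℕ => ((μ s) (Ici (x - 1/((n:ℝ)+1)))).toReal * Kfun (μ t) x)
          atTop (𝓝 (((μ s) (Ici x)).toReal * Kfun (μ t) x)) :=
        (tendsto_Ici_left (μ s) x).mul_const _
      have := ge_of_tendsto' htd key
      linarith
    · have : psiWds (μ t) x = ⊤ := by rw [psiWds, if_neg hxt]
      rw [this]
      exact le_top
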